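/- Let Λ be the K3 lattice and h_g = e₃ + (g−1)f₃ with g ≥ 3. If f ∈ Λ is a primitive isotropic vector with f·h_g = 2, then the sublattice spanned by h_g and f is isometric to ⟨2⟩ ⊥ ⟨−2⟩ if g is even, and to U(2) if g is odd. -/

import Mathlib

open Matrix

/-- The hyperbolic plane `U`. -/
def Umat : Matrix (Fin 2) (Fin 2) ℤ := !![0, 1; 1, 0]

/-- Index type of the K3 lattice `Λ = E₈(-1) ⊥ E₈(-1) ⊥ U ⊥ U ⊥ U`. -/
abbrev K3Ix : Type := (Fin 8 ⊕ Fin 8) ⊕ ((Fin 2 ⊕ Fin 2) ⊕ Fin 2)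

/-- Gram matrix of the K3 lattice (the `E₈` Gram matrix is its Cartan matrix). -/
def K3gram : Matrix K3Ix K3Ix ℤ :=
  Matrix.fromBlocks (Matrix.fromBlocks (-CartanMatrix.E₈) 0 0 (-CartanMatrix.E₈)) 0 0
    (Matrix.fromBlocks (Matrix.fromBlocks Umat 0 0 Umat) 0 0 Umat)

/-- The bilinear form of the K3 lattice. -/
def k3bil (x y : K3Ix → ℤ) : ℤ := ∑ i, ∑ j, x i * K3gram i j * y j

/-- `h_g = e₃ + (g-1) f₃`, where `(e₃,f₃)` is a hyperbolic basis of the third `U`. -/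
def hvec (g : ℕ) : K3Ix → ℤ :=
  Pi.single (Sum.inr (Sum.inr (0 : Fin 2)) : K3Ix) 1 +
    ((g : ℤ) - 1) • Pi.single (Sum.inr (Sum.inr (1 : Fin 2)) : K3Ix) 1

/-- If `f` is a primitive isotropic vector of the K3 lattice with
`f·h_g = 2` (`g ≥ 3`), then the sublattice spanned by `h_g` and `f` is isometric to
`⟨2⟩ ⊥ ⟨-2⟩` if `g` is even, and to `U(2)` if `g` is odd. -/
lemma k3bil_add_left (x y z : K3Ix → ℤ) : k3bil (x + y) z = k3bil x z + k3bil y z := by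
  simp only [k3bil, Pi.add_apply, add_mul, Finset.sum_add_distrib]

lemma k3bil_add_right (x y z : K3Ix → ℤ) : k3bil x (y + z) = k3bil x y + k3bil x z := by
  simp only [k3bil, Pi.add_apply, mul_add, Finset.sum_add_distrib]

lemma k3bil_smul_left (c : ℤ) (x z : K3Ix → ℤ) : k3bil (c • x) z = c * k3bil x z := by
  simp only [k3bil, Pi.smul_apply, smul_eq_mul, Finset.mul_sum, mul_assoc]

lemma K3gram_symm : ∀ i j, K3gram i j = K3gram j i := by
  letI : DecidablePred (fun i : K3Ix => ∀ j, K3gram i j = K3gram j i) :=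
    fun i => Fintype.decidableForallFintype
  decide

lemma k3bil_comm (x y : K3Ix → ℤ) : k3bil x y = k3bil y x := by
  rw [k3bil, Finset.sum_comm]
  apply Finset.sum_congr rfl; intro i _
  apply Finset.sum_congr rfl; intro j _
  rw [K3gram_symm]; ring

lemma k3bil_smul_right (c : ℤ) (x z : K3Ix → ℤ) : k3bil x (c • z) = c * k3bil x z := by
  rw [k3bil_comm, k3bil_smul_left, k3bil_comm]

lemma k3bil_single (i j : K3Ix) :
    k3bil (Pi.single i 1) (Pi.single j 1) = K3gram i j := by
  simp [k3bil, Pi.single_apply]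

lemma k3bil_hvec_hvec (g : ℕ) : k3bil (hvec g) (hvec g) = 2 * ((g : ℤ) - 1) := by
  simp only [hvec, k3bil_add_left, k3bil_add_right, k3bil_smul_left, k3bil_smul_right,
    k3bil_single]
  norm_num [K3gram, Umat, Matrix.fromBlocks]
  ring

lemma span_pair_mem (h f : K3Ix → ℤ) (c : ℤ) :
    h + c • f ∈ Submodule.span ℤ ({h, f} : Set (K3Ix → ℤ)) := by
  exact Submodule.add_mem _ (Submodule.subset_span (Set.mem_insert _ _))
    (Submodule.smul_mem _ _ (Submodule.subset_span (Set.mem_insert_of_mem _ rfl)))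

theorem k3_span_hg_f_degree_two_classification
    (g : ℕ) (hg : 3 ≤ g) (f : K3Ix → ℤ)
    (hfprim : ∀ (m : ℤ) (w : K3Ix → ℤ), f = m • w → IsUnit m)
    (hfiso : k3bil f f = 0) (hfh : k3bil f (hvec g) = 2) :
    (Even g → ∃ a b : K3Ix → ℤ,
      Submodule.span ℤ {a, b} = Submodule.span ℤ {hvec g, f} ∧
      k3bil a a = 2 ∧ k3bil b b = -2 ∧ k3bil a b = 0) ∧
    (Odd g → ∃ a b : K3Ix → ℤ,
      Submodule.span ℤ {a, b} = Submodule.span ℤ {hvec g, f} ∧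
      k3bil a a = 0 ∧ k3bil b b = 0 ∧ k3bil a b = 2) := by
  set h := hvec g with hh
  have hhf : k3bil h f = 2 := by rw [k3bil_comm]; exact hfh
  have hhh : k3bil h h = 2 * ((g : ℤ) - 1) := k3bil_hvec_hvec g
  have key : ∀ c₁ c₂ : ℤ, c₁ - c₂ = 1 →
      Submodule.span ℤ ({h + c₁ • f, h + c₂ • f} : Set (K3Ix → ℤ)) =
        Submodule.span ℤ ({h, f} : Set (K3Ix → ℤ)) := by
    intro c₁ c₂ hc
    apply le_antisymm
    · rw [Submodule.span_le]
      rintro x (rfl | rfl)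
      · exact span_pair_mem h f c₁
      · exact span_pair_mem h f c₂
    · rw [Submodule.span_le]
      have ha : (h + c₁ • f) ∈ Submodule.span ℤ ({h + c₁ • f, h + c₂ • f} : Set (K3Ix → ℤ)) :=
        Submodule.subset_span (Set.mem_insert _ _)
      have hb : (h + c₂ • f) ∈ Submodule.span ℤ ({h + c₁ • f, h + c₂ • f} : Set (K3Ix → ℤ)) :=
        Submodule.subset_span (Set.mem_insert_of_mem _ rfl)
      have hfmem : f ∈ Submodule.span ℤ ({h + c₁ • f, h + c₂ • f} : Set (K3Ix → ℤ)) := by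
        have : f = (h + c₁ • f) - (h + c₂ • f) := by
          have : c₁ = c₂ + 1 := by omega
          subst this; module
        have mem := Submodule.sub_mem _ ha hb
        rwa [← this] at mem
      have hhmem : h ∈ Submodule.span ℤ ({h + c₁ • f, h + c₂ • f} : Set (K3Ix → ℤ)) := by
        have : h = (h + c₁ • f) - c₁ • f := by module
        have mem := Submodule.sub_mem _ ha (Submodule.smul_mem _ c₁ hfmem)
        rwa [← this] at mem
      rintro x (rfl | rfl)
      · exact hhmem
      · exact hfmem
  constructor
  · rintro ⟨k, rfl⟩
    refine ⟨h + (1 - (k : ℤ)) • f, h + (-(k : ℤ)) • f, key _ _ (by ring), ?_, ?_, ?_⟩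
    all_goals
      simp only [k3bil_add_left, k3bil_add_right, k3bil_smul_left, k3bil_smul_right,
        hhh, hhf, hfh, hfiso]
      push_cast
      ring
  · rintro ⟨k, rfl⟩
    refine ⟨f, h + (-(k : ℤ)) • f, ?_, hfiso, ?_, ?_⟩
    · have hspan : ({f, h + (-(k:ℤ)) • f} : Set (K3Ix → ℤ)) = {h + (-(k:ℤ)) • f, f} := by
        exact Set.pair_comm _ _
      rw [hspan]
      apply le_antisymm
      · rw [Submodule.span_le]
        rintro x (rfl | rfl)
        · exact span_pair_mem h f _
        · exact Submodule.subset_span (Set.mem_insert_of_mem _ rfl)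
      · rw [Submodule.span_le]
        have hb : (h + (-(k:ℤ)) • f) ∈
            Submodule.span ℤ ({h + (-(k:ℤ)) • f, f} : Set (K3Ix → ℤ)) :=
          Submodule.subset_span (Set.mem_insert _ _)
        have hfmem : f ∈ Submodule.span ℤ ({h + (-(k:ℤ)) • f, f} : Set (K3Ix → ℤ)) :=
          Submodule.subset_span (Set.mem_insert_of_mem _ rfl)
        have hhmem : h ∈ Submodule.span ℤ ({h + (-(k:ℤ)) • f, f} : Set (K3Ix → ℤ)) := by
          have : h = (h + (-(k:ℤ)) • f) - (-(k:ℤ)) • f := by module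
          have mem := Submodule.sub_mem _ hb (Submodule.smul_mem _ (-(k:ℤ)) hfmem)
          rwa [← this] at mem
        rintro x (rfl | rfl)
        · exact hhmem
        · exact hfmem
    all_goals
      simp only [k3bil_add_left, k3bil_add_right, k3bil_smul_left, k3bil_smul_right,
        hhh, hhf, hfh, hfiso]
      push_cast
      ring
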